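/- Let B be a complete Boolean algebra, Λ an infinite index set, (a_n : n < ω) a decreasing sequence in B with a_0 = ⊤ and ⨅_n a_n = ⊥, and (b_s : s a finite subset of Λ) a multiplicative distribution on B such that b_s ≤ a_{|s|} for every finite s ⊆ Λ. Then B contains an antichain of cardinality at least |Λ|. -/

import Mathlib

open Cardinal

/-- `b` is a multiplicative distribution on `B` indexed by finite subsets of `Λ`:
all values nonzero, `b ∅ = ⊤`, antitone with respect to inclusion, and multiplicative. -/
def IsMultDistribution {B : Type*} [BooleanAlgebra B] {Λ : Type*} (b : Finset Λ → B) : Prop :=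
  (∀ s : Finset Λ, b s ≠ ⊥) ∧ b ∅ = ⊤ ∧ (∀ s t : Finset Λ, s ⊆ t → b t ≤ b s) ∧
    ∀ s : Finset Λ, b s = s.inf fun α => b {α}

/-- An antichain in a Boolean algebra: a set of pairwise disjoint nonzero elements. -/
def IsBAAntichain {B : Type*} [BooleanAlgebra B] (A : Set B) : Prop :=
  ⊥ ∉ A ∧ A.Pairwise fun c d => c ⊓ d = ⊥

/-- given a decreasing sequence `(a_n)` with `a 0 = ⊤` and `⨅ a_n = ⊥` and a
multiplicative distribution `(b_s)` indexed by finite subsets of an infinite `Λ` with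
`b s ≤ a |s|`, the algebra `B` contains an antichain of cardinality at least `|Λ|`. -/
theorem stmt2 {B : Type u} [CompleteBooleanAlgebra B] {Λ : Type v} [Infinite Λ]
    (a : ℕ → B) (ha0 : a 0 = ⊤) (hmono : Antitone a) (hainf : (⨅ n, a n) = ⊥)
    (b : Finset Λ → B) (hb : IsMultDistribution b)
    (hle : ∀ s : Finset Λ, b s ≤ a s.card) :
    ∃ A : Set B, IsBAAntichain A ∧ Cardinal.lift.{u} #Λ ≤ Cardinal.lift.{v} #A := by
  classical
  obtain ⟨hbne, -, -, hbmul⟩ := hb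
  set d : ℕ → Λ → B := fun n α => b {α} ⊓ (a n ⊓ (a (n + 1))ᶜ) with hd
  -- the telescoping sup is ⊤
  have hsup : (⨆ n, a n ⊓ (a (n + 1))ᶜ) = ⊤ := by
    set x := ⨆ n, a n ⊓ (a (n + 1))ᶜ with hx
    have hstep : ∀ n, xᶜ ≤ a n := by
      intro n
      induction n with
      | zero => rw [ha0]; exact le_top
      | succ n ih =>
        have h1 : xᶜ ⊓ (a (n + 1))ᶜ ≤ x :=
          le_trans (inf_le_inf_right _ ih) (le_iSup (fun n => a n ⊓ (a (n + 1))ᶜ) n)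
        have h2 : xᶜ ⊓ (a (n + 1))ᶜ ≤ ⊥ := by
          calc xᶜ ⊓ (a (n + 1))ᶜ ≤ x ⊓ xᶜ := le_inf h1 inf_le_left
            _ = ⊥ := inf_compl_eq_bot
        exact sdiff_eq_bot_iff.mp (le_bot_iff.mp (by rwa [sdiff_eq]))
    have hxc : xᶜ ≤ ⊥ := by rw [← hainf]; exact le_iInf hstep
    rw [← compl_compl x, le_bot_iff.mp hxc, compl_bot]
  -- each b {α} meets some level
  have hdne : ∀ α : Λ, ∃ n, d n α ≠ ⊥ := by
    intro α
    by_contra h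
    push_neg at h
    apply hbne {α}
    have h1 : b {α} = b {α} ⊓ ⨆ n, a n ⊓ (a (n + 1))ᶜ := by rw [hsup, inf_top_eq]
    rw [h1, inf_iSup_eq]
    exact iSup_eq_bot.mpr h
  -- level meets
  set m : ℕ → Finset Λ → B := fun n T => T.inf (d n) with hm
  have hmb : ∀ (N : ℕ) (T : Finset Λ), m N T ≤ b T := by
    intro N T
    have : m N T ≤ T.inf fun β => b {β} :=
      Finset.inf_mono_fun fun β _ => inf_le_left
    rwa [← hbmul T] at this
  have hma : ∀ (N : ℕ) (T : Finset Λ), T.Nonempty → m N T ≤ a N ⊓ (a (N + 1))ᶜ := by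
    rintro N T ⟨β, hβ⟩
    exact le_trans (Finset.inf_le hβ) inf_le_right
  have hcard : ∀ (N : ℕ) (T : Finset Λ), T.Nonempty → m N T ≠ ⊥ → T.card ≤ N := by
    intro N T hTne hTm
    by_contra h
    push_neg at h
    apply hTm
    have h1 : m N T ≤ a (N + 1) := le_trans (hmb N T) (le_trans (hle T) (hmono h))
    have h2 : m N T ≤ (a (N + 1))ᶜ := le_trans (hma N T hTne) inf_le_right
    have : m N T ≤ a (N + 1) ⊓ (a (N + 1))ᶜ := le_inf h1 h2
    rwa [inf_compl_eq_bot, le_bot_iff] at this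
  choose n hn using hdne
  -- choose a cluster of maximal cardinality containing each α
  have hCex : ∀ α : Λ, ∃ C : Finset Λ, (α ∈ C ∧ m (n α) C ≠ ⊥) ∧
      ∀ D : Finset Λ, α ∈ D → m (n α) D ≠ ⊥ → D.card ≤ C.card := by
    intro α
    set S : Set ℕ := {k | ∃ C : Finset Λ, (α ∈ C ∧ m (n α) C ≠ ⊥) ∧ C.card = k} with hS
    have hSne : S.Nonempty := by
      refine ⟨1, {α}, ⟨Finset.mem_singleton_self α, ?_⟩, Finset.card_singleton α⟩
      simpa [hm] using hn α
    have hSbdd : BddAbove S := by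
      refine ⟨n α, ?_⟩
      rintro k ⟨C, ⟨hαC, hCm⟩, rfl⟩
      exact hcard _ _ ⟨α, hαC⟩ hCm
    obtain ⟨C, hC, hCcard⟩ := Nat.sSup_mem hSne hSbdd
    refine ⟨C, hC, fun D hαD hDm => ?_⟩
    rw [hCcard]
    exact le_csSup hSbdd ⟨D, ⟨hαD, hDm⟩, rfl⟩
  choose C hC hCmax using hCex
  have hαC : ∀ α, α ∈ C α := fun α => (hC α).1
  have hCm : ∀ α, m (n α) (C α) ≠ ⊥ := fun α => (hC α).2
  set F : Λ → B := fun α => m (n α) (C α) with hF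
  have hFne : ∀ α, F α ≠ ⊥ := hCm
  have hFlev : ∀ α, F α ≤ a (n α) ⊓ (a (n α + 1))ᶜ := fun α => hma _ _ ⟨α, hαC α⟩
  -- different levels are disjoint
  have hlev : ∀ α β : Λ, n α < n β → F α ⊓ F β = ⊥ := by
    intro α β hlt
    have h1 : F α ⊓ F β ≤ (a (n α + 1))ᶜ ⊓ a (n α + 1) := by
      refine le_inf (le_trans inf_le_left (le_trans (hFlev α) inf_le_right)) ?_
      exact le_trans inf_le_right (le_trans (hFlev β) (le_trans inf_le_left (hmono hlt)))
    rw [compl_inf_eq_bot] at h1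
    exact le_bot_iff.mp h1
  -- the key: meeting values have the same cluster
  have hkey : ∀ α β : Λ, F α ⊓ F β ≠ ⊥ → n α = n β ∧ C α = C β := by
    intro α β hne
    have hnn : n α = n β := by
      rcases lt_trichotomy (n α) (n β) with h | h | h
      · exact absurd (hlev α β h) hne
      · exact h
      · exact absurd (by rw [inf_comm]; exact hlev β α h) hne
    refine ⟨hnn, ?_⟩
    have hunion : m (n α) (C α ∪ C β) ≠ ⊥ := by
      show (C α ∪ C β).inf (d (n α)) ≠ ⊥
      rw [Finset.inf_union]
      show (F α ⊓ (C β).inf (d (n α))) ≠ ⊥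
      rw [hnn]
      exact hne
    have hunion' : m (n β) (C α ∪ C β) ≠ ⊥ := by rwa [hnn] at hunion
    have h1 : (C α ∪ C β).card ≤ (C α).card :=
      hCmax α _ (Finset.mem_union_left _ (hαC α)) hunion
    have h2 : (C α ∪ C β).card ≤ (C β).card :=
      hCmax β _ (Finset.mem_union_right _ (hαC β)) hunion'
    have e1 : C α = C α ∪ C β := Finset.eq_of_subset_of_card_le Finset.subset_union_left h1
    have e2 : C β = C α ∪ C β := Finset.eq_of_subset_of_card_le Finset.subset_union_right h2
    exact e1.trans e2.symm
  have hFeq : ∀ α β : Λ, F α ⊓ F β ≠ ⊥ → F α = F β := by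
    intro α β hne
    obtain ⟨h1, h2⟩ := hkey α β hne
    rw [hF]
    simp only [h1, h2]
  -- the antichain
  refine ⟨Set.range F, ⟨?_, ?_⟩, ?_⟩
  · rintro ⟨α, hα⟩
    exact hFne α hα
  · rintro c ⟨α, rfl⟩ e ⟨β, rfl⟩ hne
    by_contra h
    exact hne (hFeq α β h)
  · -- cardinality
    have hfiber : ∀ α β : Λ, F α = F β → C α = C β := by
      intro α β h
      refine (hkey α β ?_).2
      rw [h, inf_idem]
      exact hFne β
    -- embedding into (range F) × ℕ
    have hemb : Nonempty (Λ ↪ (Set.range F) × ℕ) := by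
      refine ⟨⟨fun α => (⟨F α, Set.mem_range_self α⟩, (C α).toList.idxOf α), ?_⟩⟩
      intro α β h
      have h1 : F α = F β := congrArg Subtype.val (congrArg Prod.fst h)
      have h2 : (C α).toList.idxOf α = (C β).toList.idxOf β := congrArg Prod.snd h
      have hCC : C α = C β := hfiber α β h1
      rw [hCC] at h2
      exact (List.idxOf_inj ((Finset.mem_toList).mpr (hCC ▸ hαC α))).mp h2
    -- the range is infinite
    have hinf : Infinite (Set.range F) := by
      rw [Set.infinite_coe_iff]
      intro hfin
      have hfibfin : ∀ v : B, (F ⁻¹' {v}).Finite := by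
        intro v
        rcases Set.eq_empty_or_nonempty (F ⁻¹' {v}) with h | ⟨α, hα⟩
        · rw [h]; exact Set.finite_empty
        · refine Set.Finite.subset (C α).finite_toSet ?_
          intro β hβ
          have : F α = F β := by
            rw [Set.mem_preimage, Set.mem_singleton_iff] at hα hβ
            rw [hα, hβ]
          have := hfiber α β this
          simpa [← this] using hαC β
      have : (Set.univ : Set Λ).Finite := by
        have : (Set.univ : Set Λ) ⊆ ⋃ v ∈ Set.range F, F ⁻¹' {v} := by
          intro α _
          simp only [Set.mem_iUnion]
          exact ⟨F α, Set.mem_range_self α, rfl⟩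
        exact Set.Finite.subset (Set.Finite.biUnion hfin fun v _ => hfibfin v) this
      exact Set.infinite_univ this
    have h1 : Cardinal.lift.{u} #Λ ≤ Cardinal.lift.{v} #((Set.range F) × ℕ) :=
      Cardinal.lift_mk_le'.mpr hemb
    have h2 : #((Set.range F) × ℕ) = #(Set.range F) := by
      simp [Cardinal.mk_prod, Cardinal.mul_aleph0_eq (Cardinal.aleph0_le_mk _)]
    rwa [h2] at h1
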